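/- Let n be a positive integer and let E be a subring of the matrix ring Mₙ(ℤ) such that the ℚ-subalgebra of Mₙ(ℚ) generated by (the image of) E is a semisimple ring. Let E* be the centralizer of E in Mₙ(ℤ) and E** the centralizer of E* in Mₙ(ℤ) (the double centralizer). Then E ⊆ E** and E has finite index in E** as an additive subgroup; in particular, for all but finitely many primes ℓ, the images of E and of E** under entrywise reduction modulo ℓ in Mₙ(𝔽_ℓ) coincide. -/

import Mathlib

set_option synthInstance.maxHeartbeats 1000000
set_option maxHeartbeats 2000000

open Module

/-- Double centralizer theorem for a semisimple algebra acting on `ℚ^n`. -/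
private theorem stmt6_dc {n : ℕ} (R : Type) [Ring R] [Algebra ℚ R] [IsSemisimpleRing R]
    (ρ : R →ₐ[ℚ] Module.End ℚ (Fin n → ℚ)) :
    Set.centralizer (Set.centralizer (Set.range ρ)) ⊆ Set.range ρ := by
  intro f hf
  letI : Module R (Fin n → ℚ) := Module.compHom _ ρ.toRingHom
  haveI : IsSemisimpleModule R (Fin n → (Fin n → ℚ)) := IsSemisimpleRing.isSemisimpleModule
  let v : Fin n → (Fin n → ℚ) := fun i => Pi.single i 1
  let N : Submodule R (Fin n → (Fin n → ℚ)) := Submodule.span R {v}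
  obtain ⟨N', hcpl⟩ := exists_isCompl N
  let q : (Fin n → (Fin n → ℚ)) →ₗ[R] ↥N := Submodule.linearProjOfIsCompl N N' hcpl
  let p : (Fin n → (Fin n → ℚ)) →ₗ[R] (Fin n → (Fin n → ℚ)) := N.subtype.comp q
  have hpN : ∀ x, p x ∈ N := fun x => (q x).2
  have hv : v ∈ N := Submodule.mem_span_singleton_self v
  have h3 : q v = ⟨v, hv⟩ := Submodule.linearProjOfIsCompl_apply_left hcpl ⟨v, hv⟩
  have hpv : p v = v := congrArg Subtype.val h3
  have hsingle : ∀ (a : R) (j : Fin n) (w : Fin n → ℚ),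
      Pi.single j (ρ a w) = a • (Pi.single j w : Fin n → (Fin n → ℚ)) := by
    intro a j w
    funext k
    rcases eq_or_ne k j with rfl | hk
    · rw [Pi.smul_apply, Pi.single_eq_same, Pi.single_eq_same]
      rfl
    · rw [Pi.smul_apply, Pi.single_eq_of_ne hk, Pi.single_eq_of_ne hk]
      show (0 : Fin n → ℚ) = ρ a 0
      rw [map_zero]
  have hQsmul : ∀ (c : ℚ) (w : Fin n → ℚ), c • w = ρ (algebraMap ℚ R c) w := by
    intro c w
    rw [AlgHom.commutes]
    simp [Module.algebraMap_end_apply]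
  let g : Fin n → Fin n → Module.End ℚ (Fin n → ℚ) := fun i j =>
    { toFun := fun w => p (Pi.single j w) i
      map_add' := by
        intro w w'
        show p (Pi.single j (w + w')) i = p (Pi.single j w) i + p (Pi.single j w') i
        rw [Pi.single_add, map_add]
        rfl
      map_smul' := by
        intro c w
        show p (Pi.single j (c • w)) i = c • (p (Pi.single j w) i)
        rw [hQsmul, hsingle, map_smul]
        show (algebraMap ℚ R c • p (Pi.single j w) : Fin n → Fin n → ℚ) i = _
        show ρ (algebraMap ℚ R c) (p (Pi.single j w) i) = _
        rw [← hQsmul] }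
  have hgC : ∀ i j, (g i j : Module.End ℚ (Fin n → ℚ))
      ∈ Set.centralizer (Set.range ρ) := by
    intro i j x hx
    obtain ⟨a, rfl⟩ := hx
    apply LinearMap.ext
    intro w
    show ρ a ((g i j) w) = (g i j) (ρ a w)
    show ρ a (p (Pi.single j w) i) = p (Pi.single j (ρ a w)) i
    rw [hsingle, map_smul]
    rfl
  have hfg : ∀ i j, f * (g i j) = (g i j) * f := fun i j => (hf (g i j) (hgC i j)).symm
  have hp_entries : ∀ (x : Fin n → (Fin n → ℚ)) (i : Fin n), p x i = ∑ j, g i j (x j) := by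
    intro x i
    have hx : x = ∑ j, (Pi.single j (x j) : Fin n → (Fin n → ℚ)) := by
      funext k; rw [Finset.sum_apply]; simp [Pi.single_apply]
    conv_lhs => rw [hx]
    rw [map_sum, Finset.sum_apply]
    rfl
  have key : ∀ x : Fin n → (Fin n → ℚ),
      p (fun i => f (x i)) = fun i => f (p x i) := by
    intro x
    funext i
    rw [hp_entries, hp_entries, map_sum]
    congr 1
    funext j
    have h := congrArg (fun h : Module.End ℚ (Fin n → ℚ) => h (x j)) (hfg i j)
    exact (h : f (g i j (x j)) = g i j (f (x j))).symm
  have hfv : (fun i => f (v i)) ∈ N := by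
    have h1 : p (fun i => f (v i)) ∈ N := hpN _
    rw [key, hpv] at h1
    exact h1
  obtain ⟨a, ha⟩ := Submodule.mem_span_singleton.mp hfv
  refine ⟨a, ?_⟩
  apply (Pi.basisFun ℚ (Fin n)).ext
  intro i
  have h2 := congrFun ha i
  simp only [Pi.basisFun_apply]
  exact h2

private lemma stmt6_rat_clear (q : ℚ) (d : ℕ) (h : q.den ∣ d) :
    ∃ m : ℤ, (m : ℚ) = (d : ℚ) * q := by
  obtain ⟨c, rfl⟩ := h
  have hden : (q.den : ℚ) ≠ 0 := by exact_mod_cast q.den_ne_zero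
  have h2 : (q.den : ℚ) * q = (q.num : ℚ) := by
    rw [mul_comm]
    exact (eq_div_iff hden).mp (Rat.num_div_den q).symm
  refine ⟨q.num * c, ?_⟩
  push_cast
  rw [mul_comm (q.den : ℚ) (c : ℚ), mul_assoc, h2, mul_comm]

/-- Clearing denominators of a rational matrix. -/
private lemma stmt6_mat_clear {n : ℕ} (y : Matrix (Fin n) (Fin n) ℚ) :
    ∃ d : ℕ, 0 < d ∧ ∃ z : Matrix (Fin n) (Fin n) ℤ,
      (Int.castRingHom ℚ).mapMatrix z = (d : ℚ) • y := by
  classical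
  refine ⟨∏ ij : Fin n × Fin n, (y ij.1 ij.2).den,
    Finset.prod_pos fun i _ => (y i.1 i.2).pos, ?_⟩
  set d : ℕ := ∏ ij : Fin n × Fin n, (y ij.1 ij.2).den with hd
  have hdvd : ∀ i j, (y i j).den ∣ d :=
    fun i j => Finset.dvd_prod_of_mem (f := fun ij : Fin n × Fin n => (y ij.1 ij.2).den)
      (Finset.mem_univ (i, j))
  choose m hm using fun i j => stmt6_rat_clear (y i j) d (hdvd i j)
  refine ⟨Matrix.of m, ?_⟩
  ext i j
  rw [RingHom.mapMatrix_apply, Matrix.map_apply, Matrix.smul_apply, smul_eq_mul, ← hm i j]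
  rfl

private lemma stmt6_span_clear {M : Type} [Ring M] [Algebra ℚ M] (S : Subring M) {x : M}
    (hx : x ∈ Submodule.span ℚ (S : Set M)) : ∃ d : ℕ, 0 < d ∧ (d : ℚ) • x ∈ S := by
  induction hx using Submodule.span_induction with
  | mem x h => exact ⟨1, one_pos, by rw [Nat.cast_one, one_smul]; exact h⟩
  | zero => exact ⟨1, one_pos, by rw [smul_zero]; exact S.zero_mem⟩
  | add x y hx hy ihx ihy =>
      obtain ⟨dx, hdx, hx'⟩ := ihx
      obtain ⟨dy, hdy, hy'⟩ := ihy
      refine ⟨dx * dy, Nat.mul_pos hdx hdy, ?_⟩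
      rw [smul_add]
      apply S.add_mem
      · have h1 : ((dx * dy : ℕ) : ℚ) • x = dy • ((dx : ℚ) • x) := by
          rw [← Nat.cast_smul_eq_nsmul ℚ dy, smul_smul]
          congr 1
          push_cast; ring
        rw [h1]; exact nsmul_mem hx' dy
      · have h1 : ((dx * dy : ℕ) : ℚ) • y = dx • ((dy : ℚ) • y) := by
          rw [← Nat.cast_smul_eq_nsmul ℚ dx, smul_smul]
          congr 1
          push_cast; ring
        rw [h1]; exact nsmul_mem hy' dx
  | smul c x hx ih =>
      obtain ⟨d, hd, hx'⟩ := ih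
      obtain ⟨m, hm⟩ := stmt6_rat_clear c c.den dvd_rfl
      refine ⟨d * c.den, Nat.mul_pos hd c.pos, ?_⟩
      have h1 : ((d * c.den : ℕ) : ℚ) • (c • x) = m • ((d : ℚ) • x) := by
        rw [smul_smul, ← Int.cast_smul_eq_zsmul ℚ, smul_smul]
        congr 1
        rw [hm]
        push_cast; ring
      rw [h1]; exact zsmul_mem hx' m

/-- Let `E` be a subring of `Mₙ(ℤ)` such that the `ℚ`-subalgebra of `Mₙ(ℚ)` generated by
`E` is semisimple. Let `E*` be the centralizer of `E` in `Mₙ(ℤ)` and `E**` the double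
centralizer. Then `E ⊆ E**`, `E` has finite index in `E**` as an additive subgroup, and
for all but finitely many primes `ℓ` the images of `E` and `E**` in `Mₙ(𝔽_ℓ)` coincide. -/
theorem stmt6 (n : ℕ) (hn : 0 < n) (E : Subring (Matrix (Fin n) (Fin n) ℤ))
    (hss : IsSemisimpleRing
      (Algebra.adjoin ℚ
        ((E.map (Int.castRingHom ℚ).mapMatrix : Subring (Matrix (Fin n) (Fin n) ℚ)) :
          Set (Matrix (Fin n) (Fin n) ℚ)))) :
    E ≤ Subring.centralizer
        ((Subring.centralizer (E : Set (Matrix (Fin n) (Fin n) ℤ))) :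
          Set (Matrix (Fin n) (Fin n) ℤ)) ∧
    E.toAddSubgroup.relIndex
        (Subring.centralizer
          ((Subring.centralizer (E : Set (Matrix (Fin n) (Fin n) ℤ))) :
            Set (Matrix (Fin n) (Fin n) ℤ))).toAddSubgroup ≠ 0 ∧
    {ℓ : ℕ | ℓ.Prime ∧
      E.map (Int.castRingHom (ZMod ℓ)).mapMatrix ≠
        (Subring.centralizer
          ((Subring.centralizer (E : Set (Matrix (Fin n) (Fin n) ℤ))) :
            Set (Matrix (Fin n) (Fin n) ℤ))).map
          (Int.castRingHom (ZMod ℓ)).mapMatrix}.Finite := by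
  classical
  set φ : Matrix (Fin n) (Fin n) ℤ →+* Matrix (Fin n) (Fin n) ℚ :=
    (Int.castRingHom ℚ).mapMatrix with hφ
  have hφinj : Function.Injective φ := Matrix.map_injective Int.cast_injective
  set A := Algebra.adjoin ℚ
      ((E.map φ : Subring (Matrix (Fin n) (Fin n) ℚ)) : Set (Matrix (Fin n) (Fin n) ℚ))
    with hA
  haveI hssA : IsSemisimpleRing A := hss
  set Z := Subring.centralizer (E : Set (Matrix (Fin n) (Fin n) ℤ)) with hZ
  set T := Subring.centralizer ((Z : Set (Matrix (Fin n) (Fin n) ℤ))) with hT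
  -- Main rationality fact: T maps into A
  have main : ∀ x ∈ T, φ x ∈ A := by
    intro x hx
    have hxC : ∀ y ∈ Set.centralizer (A : Set (Matrix (Fin n) (Fin n) ℚ)),
        φ x * y = y * φ x := by
      intro y hy
      obtain ⟨d, hd, z, hz⟩ := stmt6_mat_clear y
      have hzE : z ∈ Z := by
        rw [hZ, Subring.mem_centralizer_iff]
        intro w hw
        apply hφinj
        rw [map_mul, map_mul, hz, mul_smul_comm, smul_mul_assoc]
        congr 1
        exact hy (φ w) (Algebra.subset_adjoin ⟨w, hw, rfl⟩)
      have hxz : z * x = x * z := (Subring.mem_centralizer_iff.mp hx) z hzE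
      have h5 : φ x * ((d : ℚ) • y) = ((d : ℚ) • y) * φ x := by
        rw [← hz, ← map_mul, ← map_mul, ← hxz]
      have h6 : (d : ℚ) • (φ x * y) = (d : ℚ) • (y * φ x) := by
        rwa [mul_smul_comm, smul_mul_assoc] at h5
      have hd0 : (d : ℚ) ≠ 0 := Nat.cast_ne_zero.mpr hd.ne'
      exact smul_right_injective _ hd0 h6
    -- transfer to End and apply the double centralizer theorem
    let e : Matrix (Fin n) (Fin n) ℚ ≃ₐ[ℚ] ((Fin n → ℚ) →ₗ[ℚ] (Fin n → ℚ)) :=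
      Matrix.toLinAlgEquiv'
    let ρ : ↥A →ₐ[ℚ] ((Fin n → ℚ) →ₗ[ℚ] (Fin n → ℚ)) := e.toAlgHom.comp A.val
    have hrange : Set.range ⇑ρ = ⇑e '' (A : Set (Matrix (Fin n) (Fin n) ℚ)) := by
      ext g
      constructor
      · rintro ⟨a, rfl⟩; exact ⟨a, a.2, rfl⟩
      · rintro ⟨m, hm, rfl⟩; exact ⟨⟨m, hm⟩, rfl⟩
    have hfC : e (φ x) ∈ Set.centralizer (Set.centralizer (Set.range ⇑ρ)) := by
      intro g hg
      have hy : e.symm g ∈ Set.centralizer (A : Set (Matrix (Fin n) (Fin n) ℚ)) := by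
        intro m hm
        apply e.injective
        rw [map_mul, map_mul, AlgEquiv.apply_symm_apply]
        exact hg (e m) (by rw [hrange]; exact ⟨m, hm, rfl⟩)
      have h7 := hxC (e.symm g) hy
      have h8 := congrArg e h7.symm
      rw [map_mul, map_mul, AlgEquiv.apply_symm_apply] at h8
      exact h8
    have h9 := stmt6_dc ↥A ρ hfC
    rw [hrange] at h9
    obtain ⟨a, haA, hae⟩ := h9
    have h10 : a = φ x := e.injective hae
    rwa [← h10]
  -- key : from T to E by clearing denominators
  have key : ∀ x ∈ T, ∃ d : ℕ, 0 < d ∧ d • x ∈ E := by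
    intro x hx
    have h2 := main x hx
    have h3 : φ x ∈ Subalgebra.toSubmodule A := (Subalgebra.mem_toSubmodule A).mpr h2
    rw [hA, Algebra.adjoin_eq_span] at h3
    have hcl : Submonoid.closure ((E.map φ : Subring (Matrix (Fin n) (Fin n) ℚ)) :
        Set (Matrix (Fin n) (Fin n) ℚ)) = (E.map φ).toSubmonoid := by
      rw [← Subring.coe_toSubmonoid, Submonoid.closure_eq]
    rw [hcl, Subring.coe_toSubmonoid] at h3
    obtain ⟨d, hd, hmem⟩ := stmt6_span_clear (E.map φ) h3
    refine ⟨d, hd, ?_⟩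
    rw [Subring.mem_map] at hmem
    obtain ⟨y, hyE, hy⟩ := hmem
    have h4 : φ (d • x) = (d : ℚ) • φ x := by
      rw [map_nsmul, Nat.cast_smul_eq_nsmul]
    have h5 : y = d • x := hφinj (by rw [hy, h4])
    rwa [← h5]
  -- E ≤ T
  have hET : E ≤ T := by
    intro x hxE
    rw [hT, Subring.mem_centralizer_iff]
    intro g hg
    exact ((Subring.mem_centralizer_iff.mp hg) x hxE).symm
  -- Finiteness of the quotient
  set K := T.toAddSubgroup with hK
  set H := E.toAddSubgroup.addSubgroupOf K with hH
  haveI hQfin : Finite (↥K ⧸ H) := by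
    have hKfg : K.FG := by
      have h1 : (AddSubgroup.toIntSubmodule K).FG := IsNoetherian.noetherian _
      exact (Submodule.fg_iff_addSubgroup_fg _).mp h1
    haveI : AddGroup.FG ↥K := (AddGroup.fg_iff_addSubgroup_fg K).mpr hKfg
    haveI : AddGroup.FG (↥K ⧸ H) :=
      AddGroup.fg_of_surjective (QuotientAddGroup.mk'_surjective H)
    apply AddCommGroup.finite_of_fg_torsion
    intro qq
    induction qq using QuotientAddGroup.induction_on with
    | H x =>
      obtain ⟨d, hd, hdx⟩ := key x x.2
      rw [isOfFinAddOrder_iff_nsmul_eq_zero]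
      refine ⟨d, hd, ?_⟩
      have h0 : (QuotientAddGroup.mk' H) (d • x) = 0 := by
        rw [QuotientAddGroup.mk'_apply, QuotientAddGroup.eq_zero_iff]
        rw [hH]
        exact AddSubgroup.mem_addSubgroupOf.mpr hdx
      have h1 : d • ((x : ↥K ⧸ H)) = (QuotientAddGroup.mk' H) (d • x) := by
        rw [map_nsmul, QuotientAddGroup.mk'_apply]
      rw [h1, h0]
  have hidx : H.index ≠ 0 := AddSubgroup.index_ne_zero_of_finite
  refine ⟨hET, hidx, ?_⟩
  -- the set of bad primes
  set d0 := H.index with hd0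
  have hd0pos : 0 < d0 := Nat.pos_of_ne_zero hidx
  have hTd : ∀ x ∈ T, d0 • x ∈ E := by
    intro x hx
    have h1 : d0 • (⟨x, hx⟩ : ↥K) ∈ H := by
      have h2 : (QuotientAddGroup.mk' H) (d0 • (⟨x, hx⟩ : ↥K)) = 0 := by
        rw [map_nsmul, hd0, AddSubgroup.index_eq_card]
        exact card_nsmul_eq_zero'
      rwa [QuotientAddGroup.mk'_apply, QuotientAddGroup.eq_zero_iff] at h2
    rw [hH] at h1
    have h3 := AddSubgroup.mem_addSubgroupOf.mp h1
    simpa using h3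
  apply Set.Finite.subset (Set.finite_Iic d0)
  intro ℓ hℓ
  obtain ⟨hp, hne⟩ := hℓ
  by_contra hgt
  have hnd : ¬ (ℓ ∣ d0) := fun hdvd => hgt (Nat.le_of_dvd hd0pos hdvd)
  apply hne
  haveI : Fact ℓ.Prime := ⟨hp⟩
  set ψ : Matrix (Fin n) (Fin n) ℤ →+* Matrix (Fin n) (Fin n) (ZMod ℓ) :=
    (Int.castRingHom (ZMod ℓ)).mapMatrix with hψ
  apply le_antisymm
  · exact Subring.map_le_iff_le_comap.mpr (fun x hx => Subring.mem_comap.mpr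
      ⟨x, hET hx, rfl⟩)
  · intro w hw
    rw [Subring.mem_map] at hw ⊢
    obtain ⟨y, hyT, rfl⟩ := hw
    have hd0y : d0 • y ∈ E := hTd y hyT
    set u : ZMod ℓ := (d0 : ZMod ℓ) with hu'
    have hu : u ≠ 0 := by
      rw [hu', Ne, ZMod.natCast_eq_zero_iff]
      exact hnd
    set c : ℕ := (u⁻¹ : ZMod ℓ).val with hc
    refine ⟨c • (d0 • y), nsmul_mem hd0y c, ?_⟩
    rw [map_nsmul, map_nsmul, ← mul_smul, ← Nat.cast_smul_eq_nsmul (ZMod ℓ)]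
    have hone : ((c * d0 : ℕ) : ZMod ℓ) = 1 := by
      push_cast
      rw [hc, ZMod.natCast_val, ZMod.cast_id, ← hu']
      exact inv_mul_cancel₀ hu
    rw [hone, one_smul]
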